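/- Let 𝓔, 𝓕, 𝓖, 𝓗 be vector spaces over a field k and let A : 𝓔 → 𝓕, B : 𝓖 → 𝓗, P : 𝓖 → 𝓔, Q : 𝓔 → 𝓖, R : 𝓗 → 𝓕, S : 𝓕 → 𝓗, T : 𝓕 → 𝓔 be linear maps. If A is a proper silvern transmutation of B by philosopher's stone (P,Q,R,S,T), then the restriction of P to ker B is a linear bijection from ker B onto ker A, the restriction of Q to ker A is a linear bijection from ker A onto ker B, and the restriction of P∘Q to ker A is the identity of ker A. -/
import Mathlib


/-- If `A` is a proper silvern transmutation of `B` by `(P,Q,R,S,T)`, then `P` restricts to a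
linear bijection from `ker B` onto `ker A`, `Q` restricts to a linear bijection from `ker A`
onto `ker B`, and `P∘Q` restricted to `ker A` is the identity. -/
theorem proper_silvern_ker_bijections
    {k : Type*} [Field k]
    {E F G H : Type*}
    [AddCommGroup E] [Module k E] [AddCommGroup F] [Module k F]
    [AddCommGroup G] [Module k G] [AddCommGroup H] [Module k H]
    (A : E →ₗ[k] F) (B : G →ₗ[k] H) (P : G →ₗ[k] E) (Q : E →ₗ[k] G)
    (R : H →ₗ[k] F) (S : F →ₗ[k] H) (T : F →ₗ[k] E)
    (hpost : A ∘ₗ P = R ∘ₗ B)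
    (hpre : B ∘ₗ Q = S ∘ₗ A)
    (hreg : P ∘ₗ Q + T ∘ₗ A = LinearMap.id)
    (hproper : LinearMap.ker B ⊓ LinearMap.ker P = ⊥) :
    (Set.InjOn P (LinearMap.ker B) ∧
      P '' (LinearMap.ker B : Set G) = (LinearMap.ker A : Set E)) ∧
    (Set.InjOn Q (LinearMap.ker A) ∧
      Q '' (LinearMap.ker A : Set E) = (LinearMap.ker B : Set G)) ∧
    (∀ x ∈ LinearMap.ker A, P (Q x) = x) := by
  have hpost' : ∀ g, A (P g) = R (B g) := fun g => congrFun (congrArg DFunLike.coe hpost) g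
  have hpre' : ∀ x, B (Q x) = S (A x) := fun x => congrFun (congrArg DFunLike.coe hpre) x
  have hreg' : ∀ x, P (Q x) + T (A x) = x := fun x => congrFun (congrArg DFunLike.coe hreg) x
  have hprop : ∀ g, B g = 0 → P g = 0 → g = 0 := by
    intro g h1 h2
    have : g ∈ LinearMap.ker B ⊓ LinearMap.ker P := ⟨h1, h2⟩
    simpa [hproper] using this
  -- P Q = id on ker A
  have hPQ : ∀ x ∈ LinearMap.ker A, P (Q x) = x := by
    intro x hx
    have hx0 : A x = 0 := hx
    have := hreg' x
    simpa [hx0] using this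
  -- Q maps ker A into ker B
  have hQmem : ∀ x ∈ LinearMap.ker A, Q x ∈ LinearMap.ker B := by
    intro x hx
    have hx0 : A x = 0 := hx
    simp [LinearMap.mem_ker, hpre' x, hx0]
  -- P maps ker B into ker A
  have hPmem : ∀ g ∈ LinearMap.ker B, P g ∈ LinearMap.ker A := by
    intro g hg
    have hg0 : B g = 0 := hg
    simp [LinearMap.mem_ker, hpost' g, hg0]
  refine ⟨⟨?_, ?_⟩, ⟨?_, ?_⟩, hPQ⟩
  · intro g1 h1 g2 h2 heq
    have h1' : B g1 = 0 := h1
    have h2' : B g2 = 0 := h2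
    have : g1 - g2 = 0 := hprop _ (by simp [h1', h2']) (by simp [heq])
    exact sub_eq_zero.mp this
  · apply Set.eq_of_subset_of_subset
    · rintro _ ⟨g, hg, rfl⟩; exact hPmem g hg
    · intro x hx
      exact ⟨Q x, hQmem x hx, hPQ x hx⟩
  · intro x1 h1 x2 h2 heq
    have := hPQ x1 h1
    rw [heq, hPQ x2 h2] at this
    exact this.symm
  · apply Set.eq_of_subset_of_subset
    · rintro _ ⟨x, hx, rfl⟩; exact hQmem x hx
    · intro g hg
      refine ⟨P g, hPmem g hg, ?_⟩
      have hPg : P (Q (P g)) = P g := hPQ _ (hPmem g hg)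
      have hB : B (Q (P g) - g) = 0 := by
        have hg0 : B g = 0 := hg
        have : A (P g) = 0 := hPmem g hg
        simp [hpre', this, hg0]
      have hP : P (Q (P g) - g) = 0 := by simp [hPg]
      have := hprop _ hB hP
      exact sub_eq_zero.mp this
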